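/- The range of Π₀ equals the linear span of the set {𝒜₀ δ_f : f ∈ B, v(f) = 0}; equivalently, a vector ψ ∈ 𝓗 satisfies Π₀ ψ = ψ if and only if ψ lies in this span. -/

import Mathlib

open scoped BigOperators

noncomputable section

variable {A B C : Type} [AddCommGroup A] [Fintype A] [AddCommGroup B] [Fintype B]
  [DecidableEq B] [AddCommGroup C] [Fintype C]

/-- The shift operator `P_t` on the Hilbert space `𝓗 = B → ℂ`: `(P_t ψ)(g) = ψ(g - t)`. -/
def shiftOp (t : B) : (B → ℂ) →ₗ[ℂ] (B → ℂ) where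
  toFun ψ := fun g => ψ (g - t)
  map_add' _ _ := rfl
  map_smul' _ _ := rfl

/-- The clock operator `Q_m` on `𝓗 = B → ℂ`: `(Q_m ψ)(g) = m(g) ψ(g)`. -/
def clockOp (m : B → ℂ) : (B → ℂ) →ₗ[ℂ] (B → ℂ) where
  toFun ψ := fun g => m g * ψ g
  map_add' ψ φ := by funext g; simp [mul_add]
  map_smul' c ψ := by funext g; simp [smul_eq_mul]; ring

/-- The basis vector `δ_f ∈ 𝓗`. -/
def deltaVec (f : B) : B → ℂ := fun g => if g = f then 1 else 0

/-- The generalized gauge projector `𝒜_s = (1/|A|) Σ_{a ∈ A} s(a) • P_{u(a)}`. -/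
def gaugeOp (u : A →+ B) (s : AddChar A ℂ) : (B → ℂ) →ₗ[ℂ] (B → ℂ) :=
  (Fintype.card A : ℂ)⁻¹ • ∑ a : A, s a • shiftOp (u a)

/-- The holonomy projector `ℬ_c = (1/|C|) Σ_r r(c) • Q_{r ∘ v}`, the sum running over all
additive characters `r : C → ℂ`. -/
def holOp (v : B →+ C) (c : C) : (B → ℂ) →ₗ[ℂ] (B → ℂ) :=
  (Fintype.card C : ℂ)⁻¹ • ∑ r : AddChar C ℂ, r c • clockOp (fun g => r (v g))

/-- The ground state projector `Π₀ = 𝒜₀ ∘ ℬ₀`. -/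
def groundProj (u : A →+ B) (v : B →+ C) : (B → ℂ) →ₗ[ℂ] (B → ℂ) :=
  gaugeOp u 1 ∘ₗ holOp v 0

lemma gauge_apply (u : A →+ B) (ψ : B → ℂ) (g : B) :
    gaugeOp u 1 ψ g = (Fintype.card A : ℂ)⁻¹ * ∑ a : A, ψ (g - u a) := by
  simp [gaugeOp, shiftOp, LinearMap.sum_apply, Finset.sum_apply]

lemma hol_apply (v : B →+ C) (ψ : B → ℂ) (g : B) [DecidableEq C] :
    holOp v 0 ψ g = if v g = 0 then ψ g else 0 := by
  have h : holOp v 0 ψ g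
      = (Fintype.card C : ℂ)⁻¹ * ∑ r : AddChar C ℂ, r (v g) * ψ g := by
    simp [holOp, clockOp, LinearMap.sum_apply, Finset.sum_apply]
  rw [h, ← Finset.sum_mul, AddChar.sum_apply_eq_ite]
  have hC : (Fintype.card C : ℂ) ≠ 0 := Nat.cast_ne_zero.2 Fintype.card_ne_zero
  split
  · field_simp
  · simp

lemma gauge_idem (u : A →+ B) (ψ : B → ℂ) :
    gaugeOp u 1 (gaugeOp u 1 ψ) = gaugeOp u 1 ψ := by
  funext g
  simp only [gauge_apply]
  have key : ∀ a : A, ∑ b : A, ψ (g - u a - u b) = ∑ b : A, ψ (g - u b) := by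
    intro a
    exact Fintype.sum_bijective (Equiv.addLeft a) (Equiv.addLeft a).bijective _ _
      (fun b => by simp [sub_sub, map_add])
  simp only [key]
  have hA : (Fintype.card A : ℂ) ≠ 0 := Nat.cast_ne_zero.2 Fintype.card_ne_zero
  rw [Finset.sum_const, Finset.card_univ, nsmul_eq_mul]
  field_simp

lemma hol_gauge_delta (u : A →+ B) (v : B →+ C) (hvu : v.comp u = 0) (f : B) (hf : v f = 0) :
    holOp v 0 (gaugeOp u 1 (deltaVec f)) = gaugeOp u 1 (deltaVec f) := by
  classical
  funext g
  rw [hol_apply]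
  split
  · rfl
  · next h =>
    rw [gauge_apply]
    have hz : ∀ a : A, deltaVec f (g - u a) = 0 := by
      intro a
      have hne : g - u a ≠ f := by
        intro heq
        apply h
        have hg : g = f + u a := by rw [← heq]; abel
        have hu : v (u a) = 0 := DFunLike.congr_fun hvu a
        rw [hg, map_add, hf, hu, add_zero]
      simp [deltaVec, hne]
    simp [hz]

lemma delta_expand (φ : B → ℂ) : φ = ∑ f : B, φ f • deltaVec f := by
  funext g
  simp [deltaVec, Finset.sum_apply, mul_ite]

/-- the range of `Π₀` is the span of `{𝒜₀ δ_f : v(f) = 0}`; equivalently,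
`Π₀ ψ = ψ` iff `ψ` lies in this span. -/
theorem groundProj_range_eq_span (u : A →+ B) (v : B →+ C) (hvu : v.comp u = 0) :
    LinearMap.range (groundProj u v) =
      Submodule.span ℂ {ψ : B → ℂ | ∃ f : B, v f = 0 ∧ ψ = gaugeOp u 1 (deltaVec f)} ∧
    ∀ ψ : B → ℂ, groundProj u v ψ = ψ ↔
      ψ ∈ Submodule.span ℂ {ψ : B → ℂ | ∃ f : B, v f = 0 ∧ ψ = gaugeOp u 1 (deltaVec f)} := by
  classical
  set S : Set (B → ℂ) := {ψ : B → ℂ | ∃ f : B, v f = 0 ∧ ψ = gaugeOp u 1 (deltaVec f)} with hS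
  have hfix : ∀ χ ∈ S, groundProj u v χ = χ := by
    rintro χ ⟨f, hf, rfl⟩
    rw [groundProj, LinearMap.comp_apply, hol_gauge_delta u v hvu f hf, gauge_idem]
  have hrange : ∀ ψ : B → ℂ, groundProj u v ψ ∈ Submodule.span ℂ S := by
    intro ψ
    have hdecomp : groundProj u v ψ
        = ∑ f : B, (holOp v 0 ψ f) • gaugeOp u 1 (deltaVec f) := by
      calc groundProj u v ψ = gaugeOp u 1 (∑ f : B, (holOp v 0 ψ f) • deltaVec f) := by
            rw [groundProj, LinearMap.comp_apply, ← delta_expand]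
        _ = ∑ f : B, (holOp v 0 ψ f) • gaugeOp u 1 (deltaVec f) := by
            rw [map_sum]; simp only [map_smul]
    rw [hdecomp]
    refine Submodule.sum_mem _ (fun f _ => ?_)
    by_cases hf : v f = 0
    · exact Submodule.smul_mem _ _ (Submodule.subset_span ⟨f, hf, rfl⟩)
    · rw [hol_apply, if_neg hf, zero_smul]
      exact Submodule.zero_mem _
  have hspan_fix : ∀ ψ ∈ Submodule.span ℂ S, groundProj u v ψ = ψ := by
    have hle : Submodule.span ℂ S ≤ LinearMap.ker (groundProj u v - LinearMap.id) :=
      Submodule.span_le.2 (fun χ hχ => by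
        simp [LinearMap.mem_ker, sub_eq_zero, hfix χ hχ])
    intro ψ hψ
    have := hle hψ
    simpa [LinearMap.mem_ker, sub_eq_zero] using this
  constructor
  · apply le_antisymm
    · rintro _ ⟨ψ, rfl⟩; exact hrange ψ
    · exact Submodule.span_le.2 (fun χ hχ => ⟨χ, hfix χ hχ⟩)
  · intro ψ
    constructor
    · intro h; rw [← h]; exact hrange ψ
    · exact hspan_fix ψ
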